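/- Let t ≥ 3 be a natural number and let G be a finite simple diamond-free graph. Let S be an independent set of G such that G ⊕ S is diamond-free and K_{1,t}-free, and let r be the center of an induced K_{1,t} of G. Then S ⊆ N(r), i.e., every vertex of S is a neighbor of r in G. -/

import Mathlib

/-- Subgraph complementation: `scompl G S` complements the subgraph of `G` induced by `S`. -/
def scompl {V : Type*} (G : SimpleGraph V) (S : Set V) : SimpleGraph V where
  Adj x y := x ≠ y ∧ ((x ∈ S ∧ y ∈ S ∧ ¬ G.Adj x y) ∨ (¬(x ∈ S ∧ y ∈ S) ∧ G.Adj x y))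
  symm := by
    refine ⟨?_⟩
    rintro x y ⟨hxy, h⟩
    refine ⟨hxy.symm, ?_⟩
    rcases h with ⟨hx, hy, h⟩ | ⟨h, hadj⟩
    · exact Or.inl ⟨hy, hx, fun h' => h (G.adj_symm h')⟩
    · exact Or.inr ⟨fun hc => h ⟨hc.2, hc.1⟩, G.adj_symm hadj⟩
  loopless := ⟨fun x h => h.1 rfl⟩

/-- Degree of a vertex in a finite simple graph. -/
noncomputable def deg {V : Type*} [Fintype V] (G : SimpleGraph V) (v : V) : ℕ :=
  (G.neighborSet v).ncard

/-- `a, b, c, d` form an induced diamond with `a`, `b` its degree-2 vertices. -/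
def IsDiamond {V : Type*} (G : SimpleGraph V) (a b c d : V) : Prop :=
  a ≠ b ∧ a ≠ c ∧ a ≠ d ∧ b ≠ c ∧ b ≠ d ∧ c ≠ d ∧
  G.Adj a c ∧ G.Adj a d ∧ G.Adj b c ∧ G.Adj b d ∧ G.Adj c d ∧ ¬ G.Adj a b

def DiamondFree {V : Type*} (G : SimpleGraph V) : Prop :=
  ∀ a b c d : V, ¬ IsDiamond G a b c d

/-- `r` together with the `t` distinct leaves `f 0, …, f (t-1)` forms an induced `K_{1,t}`
with center `r`. -/
def IsStar {V : Type*} (G : SimpleGraph V) (t : ℕ) (r : V) (f : Fin t → V) : Prop :=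
  Function.Injective f ∧ (∀ i, G.Adj r (f i)) ∧ ∀ i j, i ≠ j → ¬ G.Adj (f i) (f j)

def StarFree {V : Type*} (G : SimpleGraph V) (t : ℕ) : Prop :=
  ∀ (r : V) (f : Fin t → V), ¬ IsStar G t r f

theorem stmt11 {V : Type*} [Fintype V] (t : ℕ) (ht : 3 ≤ t) (G : SimpleGraph V)
    (hGdf : DiamondFree G)
    (S : Set V) (hind : ∀ x ∈ S, ∀ y ∈ S, ¬ G.Adj x y)
    (hdf : DiamondFree (scompl G S)) (hsf : StarFree (scompl G S) t)
    (r : V) (f : Fin t → V) (hstar : IsStar G t r f) :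
    ∀ s ∈ S, G.Adj r s := by
  obtain ⟨hinj, hadj, hnon⟩ := hstar
  intro s hs
  by_contra hrs
  have hrf : ∀ i, ¬(r ∈ S ∧ f i ∈ S) := fun i ⟨hr, hfi⟩ => hind r hr (f i) hfi (hadj i)
  have h2 : ∃ i j, i ≠ j ∧ f i ∈ S ∧ f j ∈ S := by
    by_contra h
    push_neg at h
    apply hsf r f
    refine ⟨hinj, fun i => ⟨(hadj i).ne, Or.inr ⟨hrf i, hadj i⟩⟩, ?_⟩
    rintro i j hij ⟨hne, ⟨hfi, hfj, -⟩ | ⟨-, h'⟩⟩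
    · exact h i j hij hfi hfj
    · exact hnon i j hij h'
  obtain ⟨i, j, hij, hfi, hfj⟩ := h2
  have hrS : r ∉ S := fun hr => hrf i ⟨hr, hfi⟩
  have hsfi : s ≠ f i := fun e => hrs (e ▸ hadj i)
  have hsfj : s ≠ f j := fun e => hrs (e ▸ hadj j)
  apply hdf r s (f i) (f j)
  refine ⟨fun e => hrS (e ▸ hs), (hadj i).ne, (hadj j).ne, hsfi, hsfj,
    fun e => hij (hinj e), ?_, ?_, ?_, ?_, ?_, ?_⟩
  · exact ⟨(hadj i).ne, Or.inr ⟨hrf i, hadj i⟩⟩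
  · exact ⟨(hadj j).ne, Or.inr ⟨hrf j, hadj j⟩⟩
  · exact ⟨hsfi, Or.inl ⟨hs, hfi, hind s hs (f i) hfi⟩⟩
  · exact ⟨hsfj, Or.inl ⟨hs, hfj, hind s hs (f j) hfj⟩⟩
  · exact ⟨fun e => hij (hinj e), Or.inl ⟨hfi, hfj, hnon i j hij⟩⟩
  · rintro ⟨-, ⟨hr, -, -⟩ | ⟨-, h'⟩⟩
    · exact hrS hr
    · exact hrs h'
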